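/- Let L be a dcpo. If y ∈ int_{σ_s(L)} ↑x then x ≪_s y; if moreover L is strongly continuous, then the converse also holds, so that int_{σ_s(L)} ↑x = ⇑_s x. -/
import Mathlib


open Set

variable {L : Type*}

/-- A directed subset: nonempty and directed under `≤`. -/
def DirSet [Preorder L] (D : Set L) : Prop := D.Nonempty ∧ DirectedOn (· ≤ ·) D

/-- Strongly Scott open sets (the family `σ^s(L)`). -/
def StronglyScottOpen [Preorder L] [SupSet L] (U : Set L) : Prop :=
  IsUpperSet U ∧ ∀ D : Set L, DirSet D → ∀ x : L,
    Ici (sSup D) ∩ Ici x ⊆ U → ∃ d ∈ D, Ici d ∩ Ici x ⊆ U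

/-- The strong Scott topology `σ_s(L)`, generated by the strongly Scott open sets. -/
def strongScott (L : Type*) [Preorder L] [SupSet L] : TopologicalSpace L :=
  TopologicalSpace.generateFrom {U | StronglyScottOpen U}

/-- Scott open sets. -/
def ScottOpen [Preorder L] [SupSet L] (U : Set L) : Prop :=
  IsUpperSet U ∧ ∀ D : Set L, DirSet D → sSup D ∈ U → (D ∩ U).Nonempty

/-- The Scott topology `σ(L)`. -/
def scottTop (L : Type*) [Preorder L] [SupSet L] : TopologicalSpace L :=
  TopologicalSpace.generateFrom {U | ScottOpen U}

/-- The upper topology `υ(L)`. -/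
def upperTop (L : Type*) [Preorder L] : TopologicalSpace L :=
  TopologicalSpace.generateFrom {U | ∃ x : L, U = (Iic x)ᶜ}

/-- The lower topology `ω(L)`. -/
def lowerTop (L : Type*) [Preorder L] : TopologicalSpace L :=
  TopologicalSpace.generateFrom {U | ∃ x : L, U = (Ici x)ᶜ}

/-- The strong way-below relation `x ≪_s y`. -/
def SWayBelow [Preorder L] (x y : L) : Prop :=
  ∀ D : Set L, DirSet D → ∀ a : L,
    (⋂ d ∈ D, Ici d) ∩ Ici a ⊆ Ici y → ∃ d ∈ D, Ici d ∩ Ici a ⊆ Ici x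

/-- The way-below relation `x ≪ y`. -/
def WayBelow [Preorder L] [SupSet L] (x y : L) : Prop :=
  ∀ D : Set L, DirSet D → y ≤ sSup D → ∃ d ∈ D, x ≤ d

/-- `X` with topology `t` is a C-space (w.r.t. the order of `L`). -/
def IsCSpace [Preorder L] (t : TopologicalSpace L) : Prop :=
  ∀ U : Set L, @IsOpen _ (t) U → ∀ x ∈ U, ∃ y ∈ U,
    x ∈ @interior L t (Ici y) ∧ Ici y ⊆ U

/-- `L` is a strongly continuous domain. -/
def StronglyContinuousDomain (L : Type*) [Preorder L] [SupSet L] : Prop :=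
  IsCSpace (strongScott L)

/-- `L` is a continuous domain. -/
def ContinuousDomain (L : Type*) [Preorder L] [SupSet L] : Prop :=
  ∀ x : L, DirSet {y | WayBelow y x} ∧ IsLUB {y | WayBelow y x} x

/-- `L` is a hypercontinuous domain. -/
def HypercontinuousDomain (L : Type*) [Preorder L] : Prop :=
  ∀ x : L, DirSet {y | x ∈ @interior L (upperTop L) (Ici y)} ∧
    IsLUB {y | x ∈ @interior L (upperTop L) (Ici y)} x

/-- The strong Lawson topology `λ_s(L)`: common refinement of `σ_s(L)` and `ω(L)`. -/
def strongLawson (L : Type*) [Preorder L] [SupSet L] : TopologicalSpace L :=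
  TopologicalSpace.generateFrom
    {U | @IsOpen _ (strongScott L) U ∨ @IsOpen _ (lowerTop L) U}

lemma sso_univ [Preorder L] [SupSet L] : StronglyScottOpen (univ : Set L) :=
  ⟨isUpperSet_univ, fun _ hD _ _ => ⟨hD.1.choose, hD.1.choose_spec, subset_univ _⟩⟩

lemma sso_inter [Preorder L] [SupSet L] {U V : Set L} (hU : StronglyScottOpen U)
    (hV : StronglyScottOpen V) : StronglyScottOpen (U ∩ V) := by
  refine ⟨hU.1.inter hV.1, fun D hD x h => ?_⟩
  obtain ⟨d1, hd1, h1⟩ := hU.2 D hD x (h.trans inter_subset_left)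
  obtain ⟨d2, hd2, h2⟩ := hV.2 D hD x (h.trans inter_subset_right)
  obtain ⟨d, hd, hle1, hle2⟩ := hD.2 d1 hd1 d2 hd2
  exact ⟨d, hd, subset_inter (fun z hz => h1 ⟨hle1.trans hz.1, hz.2⟩)
    (fun z hz => h2 ⟨hle2.trans hz.1, hz.2⟩)⟩

lemma sso_exists_basic [Preorder L] [SupSet L] {U : Set L}
    (hU : TopologicalSpace.GenerateOpen {U : Set L | StronglyScottOpen U} U) :
    ∀ y ∈ U, ∃ B, StronglyScottOpen B ∧ y ∈ B ∧ B ⊆ U := by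
  induction hU with
  | basic V hV => exact fun y hy => ⟨V, hV, hy, subset_rfl⟩
  | univ => exact fun y _ => ⟨univ, sso_univ, trivial, subset_rfl⟩
  | inter V W _ _ ihV ihW =>
      intro y hy
      obtain ⟨B1, h1, hy1, hs1⟩ := ihV y hy.1
      obtain ⟨B2, h2, hy2, hs2⟩ := ihW y hy.2
      exact ⟨B1 ∩ B2, sso_inter h1 h2, ⟨hy1, hy2⟩, inter_subset_inter hs1 hs2⟩
  | sUnion S _ ih =>
      intro y hy
      obtain ⟨V, hVS, hyV⟩ := hy
      obtain ⟨B, hB, hyB, hs⟩ := ih V hVS y hyV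
      exact ⟨B, hB, hyB, hs.trans (subset_sUnion_of_mem hVS)⟩

lemma sso_compl_Iic [CompletePartialOrder L] (z : L) :
    StronglyScottOpen ((Iic z)ᶜ : Set L) := by
  refine ⟨(isLowerSet_Iic z).compl, fun D hD a h => ?_⟩
  by_contra hc
  push_neg at hc
  have key : ∀ d ∈ D, ∃ w, d ≤ w ∧ a ≤ w ∧ w ≤ z := by
    intro d hd
    obtain ⟨w, hw, hw2⟩ := not_subset.mp (hc d hd)
    exact ⟨w, hw.1, hw.2, not_not.mp hw2⟩
  obtain ⟨d0, hd0⟩ := hD.1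
  obtain ⟨w0, _, haw, hwz⟩ := key d0 hd0
  have hz : z ∈ Ici (sSup D) ∩ Ici a := by
    refine ⟨?_, haw.trans hwz⟩
    apply (CompletePartialOrder.lubOfDirected D hD.2).2
    intro d hd
    obtain ⟨w, hdw, _, hwz⟩ := key d hd
    exact hdw.trans hwz
  exact h hz le_rfl

lemma smem_interior_swaybelow [CompletePartialOrder L] (x y : L)
    (hy : y ∈ @interior L (strongScott L) (Ici x)) : SWayBelow x y := by
  letI : TopologicalSpace L := strongScott L
  intro D hD a hsub
  obtain ⟨U, hUsub, hUopen, hyU⟩ := mem_interior.mp hy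
  obtain ⟨B, hB, hyB, hBU⟩ := sso_exists_basic hUopen y hyU
  have h1 : Ici (sSup D) ∩ Ici a ⊆ B := by
    intro z hz
    have hzy : z ∈ Ici y := hsub ⟨mem_iInter₂.mpr fun d hd =>
      ((CompletePartialOrder.lubOfDirected D hD.2).1 hd).trans hz.1, hz.2⟩
    exact hB.1 hzy hyB
  obtain ⟨d, hd, hdB⟩ := hB.2 D hD a h1
  exact ⟨d, hd, hdB.trans (hBU.trans hUsub)⟩

lemma swaybelow_mem_interior [CompletePartialOrder L]
    (hC : StronglyContinuousDomain L) {x y : L} (h : SWayBelow x y) :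
    y ∈ @interior L (strongScott L) (Ici x) := by
  letI : TopologicalSpace L := strongScott L
  set D : Set L := {z | y ∈ interior (Ici z)} with hDdef
  have hne : D.Nonempty := by
    obtain ⟨z, _, hz, _⟩ := hC univ isOpen_univ y trivial
    exact ⟨z, hz⟩
  have hdir : DirectedOn (· ≤ ·) D := by
    intro z1 h1 z2 h2
    obtain ⟨w, _, hyw, hsub⟩ := hC (interior (Ici z1) ∩ interior (Ici z2))
      (isOpen_interior.inter isOpen_interior) y ⟨h1, h2⟩
    have hw : w ∈ interior (Ici z1) ∩ interior (Ici z2) := hsub (le_refl w)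
    exact ⟨w, hyw, interior_subset hw.1, interior_subset hw.2⟩
  have hub : (⋂ d ∈ D, Ici d) ⊆ Ici y := by
    intro z hz
    by_contra hzy
    have hop : IsOpen ((Iic z)ᶜ) :=
      TopologicalSpace.GenerateOpen.basic _ (sso_compl_Iic z)
    have hyz : y ∈ (Iic z)ᶜ := fun hmem => hzy hmem
    obtain ⟨w, _, hyw, hsub⟩ := hC _ hop y hyz
    have hwD : w ∈ D := hyw
    exact hsub (mem_iInter₂.mp hz w hwD) le_rfl
  obtain ⟨d0, hd0⟩ := hne
  obtain ⟨d, hdD, hsub⟩ := h D ⟨⟨d0, hd0⟩, hdir⟩ d0 (fun z hz => hub hz.1)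
  refine mem_interior.mpr ⟨interior (Ici d) ∩ interior (Ici d0), ?_,
    isOpen_interior.inter isOpen_interior, hdD, hd0⟩
  exact fun z hz => hsub ⟨interior_subset hz.1, interior_subset hz.2⟩

theorem mem_strongScott_interior_Ici_iff [CompletePartialOrder L] :
    (∀ x y : L, y ∈ @interior L (strongScott L) (Ici x) → SWayBelow x y) ∧
    (StronglyContinuousDomain L →
      ∀ x : L, @interior L (strongScott L) (Ici x) = {y | SWayBelow x y}) := by
  refine ⟨smem_interior_swaybelow, fun hC x => Subset.antisymm ?_ ?_⟩
  · exact fun y hy => smem_interior_swaybelow x y hy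
  · exact fun y hy => swaybelow_mem_interior hC hy
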